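/- Let T ⊆ ℝ^q be a closed convex set whose interior contains the point x̄ but no point of a set S ⊆ ℝ^q, and suppose S is contained in the cone {x̄ + Σ_j r^j s_j : s ≥ 0}. For each j define s*_j := sup {s_j ≥ 0 : x̄ + r^j s_j ∈ T} (assumed finite and positive), and set α_j := 1/s*_j. Then every point of S of the form x̄ + Σ_j r^j s_j with s ≥ 0 satisfies Σ_j α_j s_j ≥ 1, while the point x̄ itself (s = 0) violates this inequality. -/

import Mathlib

/-- Intersection cut theorem (Balas). -/
theorem intersection_cut (q n : ℕ) (T : Set (Fin q → ℝ)) (hTclosed : IsClosed T)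
    (hTconv : Convex ℝ T) (xbar : Fin q → ℝ) (hxbar : xbar ∈ interior T)
    (S : Set (Fin q → ℝ)) (hS : ∀ x ∈ S, x ∉ interior T)
    (r : Fin n → Fin q → ℝ)
    (hScone : ∀ x ∈ S, ∃ s : Fin n → ℝ, (∀ j, 0 ≤ s j) ∧ x = xbar + ∑ j, s j • r j)
    (sstar : Fin n → ℝ) (hpos : ∀ j, 0 < sstar j)
    (hsup : ∀ j, IsLUB {t : ℝ | 0 ≤ t ∧ xbar + t • r j ∈ T} (sstar j)) :
    (∀ s : Fin n → ℝ, (∀ j, 0 ≤ s j) → (xbar + ∑ j, s j • r j) ∈ S →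
      1 ≤ ∑ j, s j / sstar j) ∧ (∑ j, (0:ℝ) / sstar j) < 1 := by
  have hxT : xbar ∈ T := interior_subset hxbar
  -- intersection points lie in T
  have hpT : ∀ j, xbar + sstar j • r j ∈ T := by
    intro j
    have hclosed : IsClosed {t : ℝ | 0 ≤ t ∧ xbar + t • r j ∈ T} := by
      apply IsClosed.inter isClosed_Ici
      exact hTclosed.preimage (by continuity)
    have hne : {t : ℝ | 0 ≤ t ∧ xbar + t • r j ∈ T}.Nonempty :=
      ⟨0, le_refl 0, by simpa using hxT⟩
    exact (hclosed.isLUB_mem (hsup j) hne).2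
  constructor
  · intro s hs hxS
    by_contra hlt
    push_neg at hlt
    have hσ0 : 0 ≤ ∑ j, s j / sstar j :=
      Finset.sum_nonneg fun j _ => div_nonneg (hs j) (hpos j).le
    set σ := ∑ j, s j / sstar j with hσ
    have key : xbar + ∑ j, s j • r j ∈ interior T := by
      rcases eq_or_lt_of_le hσ0 with h0 | h0
      · -- all s j = 0
        have hz : ∀ j ∈ Finset.univ, s j / sstar j = 0 := by
          intro j _
          have := (Finset.sum_eq_zero_iff_of_nonneg
            (fun j _ => div_nonneg (hs j) (hpos j).le)).mp h0.symm
          exact this j (Finset.mem_univ j)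
        have hsz : ∀ j, s j = 0 := fun j => by
          have := hz j (Finset.mem_univ j)
          field_simp at this
          rcases div_eq_zero_iff.mp this with h | h
          · exact h
          · exact absurd h (hpos j).ne'
        have : (∑ j, s j • r j) = 0 := by
          apply Finset.sum_eq_zero; intro j _; rw [hsz j, zero_smul]
        rw [this, add_zero]; exact hxbar
      · -- convex combination
        set y : Fin q → ℝ := ∑ j, ((s j / sstar j) / σ) • (xbar + sstar j • r j) with hy
        have hyT : y ∈ T := by
          apply hTconv.sum_mem
          · intro j _; exact div_nonneg (div_nonneg (hs j) (hpos j).le) hσ0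
          · rw [← Finset.sum_div]; field_simp; exact hσ.symm
          · intro j _; exact hpT j
        have hcomb : (1 - σ) • xbar + σ • y = xbar + ∑ j, s j • r j := by
          rw [hy, Finset.smul_sum]
          have : ∀ j ∈ Finset.univ, σ • (((s j / sstar j) / σ) • (xbar + sstar j • r j))
              = (s j / sstar j) • xbar + s j • r j := by
            intro j _
            rw [smul_smul, mul_div_cancel₀ _ h0.ne', smul_add, smul_smul,
              div_mul_cancel₀ _ (hpos j).ne']
          rw [Finset.sum_congr rfl this, Finset.sum_add_distrib, ← Finset.sum_smul,
            ← hσ, ← add_assoc, sub_smul, one_smul, sub_add_cancel]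
        rw [← hcomb]
        exact hTconv.combo_interior_closure_mem_interior hxbar
          (subset_closure hyT) (by linarith) hσ0 (by ring)
    exact hS _ hxS key
  · simp
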